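/- For every n there is a deterministic 2-store automaton A_n with O(n³) states accepting exactly the configurations (⊥,v₁)…(⊥,v_n) with p_i dividing v_i for each i (p_i the i-th prime), such that every tree automaton recognizing the E-encoding of this set needs at least 2ⁿ states. Hence the translation from 2-store automata to tree automata over the encoding E requires an exponential blow-up. -/

import Mathlib

/-! Binary trees, tree automata, the tree encoding `E` of level-2 counter
configurations, and (alternating) 2-store automata. -/

namespace Enc

/-- Binary trees with node labels in `α` (`nil` is the empty tree). -/
inductive BTree (α : Type) where
  | nil : BTree α
  | node (a : α) (l r : BTree α) : BTree α

/-- A (nondeterministic, bottom-up) finite tree automaton with states `St`. -/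
structure TreeAut (α St : Type) where
  leaf : Set St
  trans : α → St → St → Set St
  accept : Set St

/-- Evaluation relation of a tree automaton. -/
inductive TreeAutEval {α St : Type} (A : TreeAut α St) : BTree α → St → Prop
  | nil {s : St} : s ∈ A.leaf → TreeAutEval A .nil s
  | node {a : α} {l r : BTree α} {sl sr s : St} :
      TreeAutEval A l sl → TreeAutEval A r sr → s ∈ A.trans a sl sr →
      TreeAutEval A (.node a l r) s

def TreeAut.Accepts {α St : Type} (A : TreeAut α St) (t : BTree α) : Prop :=
  ∃ s ∈ A.accept, TreeAutEval A t s

/-- A set of trees is regular iff it is recognized by a tree automaton with a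
finite state set. -/
def TreeRegular {α : Type} (T : Set (BTree α)) : Prop :=
  ∃ (St : Type) (_ : Fintype St) (A : TreeAut α St), T = { t | A.Accepts t }

/-- The tree encoding `E` of a level-2 storage `p ∈ (Σ × ℕ)⁺` (as a relation;
`bot` is the designated symbol `⊥` labelling inner nodes):
`E(∅) = ∅`; if the first counter is `0` then `E((σ,0)·p_r) = ⊥(σ, E(p_r))`;
otherwise split `p` into the maximal prefix `p_l` with all counters `≥ 1`
(decremented) and the rest `p_r`, and `E(p) = ⊥(E(p_l), E(p_r))`. -/
inductive Encodes {Sig Q : Type} (bot : Sig) :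
    List (Sig × ℕ) → BTree (Sig ⊕ Q) → Prop
  | nil : Encodes bot [] .nil
  | zero {σ : Sig} {pr : List (Sig × ℕ)} {t : BTree (Sig ⊕ Q)} :
      Encodes bot pr t →
      Encodes bot ((σ, 0) :: pr)
        (.node (.inl bot) (.node (.inl σ) .nil .nil) t)
  | pos {pl pr : List (Sig × ℕ)} {tl tr : BTree (Sig ⊕ Q)} :
      pl ≠ [] → (∀ e ∈ pl, 1 ≤ e.2) →
      (∀ x, pr.head? = some x → x.2 = 0) →
      Encodes bot (pl.map (fun e => (e.1, e.2 - 1))) tl →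
      Encodes bot pr tr →
      Encodes bot (pl ++ pr) (.node (.inl bot) tl tr)

/-- Encoding of a configuration `(q,p)`: the tree `q(E(p), ∅)`. -/
def EncodesCfg {Sig Q : Type} (bot : Sig) (c : Q × List (Sig × ℕ))
    (t : BTree (Sig ⊕ Q)) : Prop :=
  ∃ tp, Encodes bot c.2 tp ∧ t = .node (.inr c.1) tp .nil

/-- The set of encodings of a set of configurations. -/
def EncImage {Sig Q : Type} (bot : Sig) (C : Set (Q × List (Sig × ℕ))) :
    Set (BTree (Sig ⊕ Q)) :=
  { t | ∃ c ∈ C, EncodesCfg bot c t }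

/-- A deterministic finite automaton over the unary alphabet `{⊥}`. -/
structure UnaryDFA (S : Type) where
  init : S
  next : S → S
  acc : Set S

/-- `D` accepts the word `⊥^m`. -/
def UnaryDFA.Accepts {S : Type} (D : UnaryDFA S) (m : ℕ) : Prop :=
  D.next^[m] D.init ∈ D.acc

/-- An alternating 2-store automaton: states `Q'` (partitioned into
existential (`exQ = true`) and universal states), final states, and a finite
set `T` of transitions, each with a source state, a symbol label, a unary
finite automaton checking the counter, and a destination state. -/
structure TwoStore (Q' Sig S T : Type) where
  exQ : Q' → Bool
  final : Set Q'
  src : T → Q'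
  sym : T → Sig
  chk : T → UnaryDFA S
  dst : T → Q'

/-- Accepting computations of a 2-store automaton on a storage, processed
entry by entry; at existential states one matching transition must succeed,
at universal states some transition must match and all matching transitions
must succeed. -/
inductive TwoStoreAcc {Q' Sig S T : Type} (A : TwoStore Q' Sig S T) :
    Q' → List (Sig × ℕ) → Prop
  | empty {q : Q'} : q ∈ A.final → TwoStoreAcc A q []
  | ex {q : Q'} {σ : Sig} {m : ℕ} {rest : List (Sig × ℕ)} (t : T) :
      A.exQ q = true → A.src t = q → A.sym t = σ → (A.chk t).Accepts m →
      TwoStoreAcc A (A.dst t) rest →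
      TwoStoreAcc A q ((σ, m) :: rest)
  | all {q : Q'} {σ : Sig} {m : ℕ} {rest : List (Sig × ℕ)} :
      A.exQ q = false →
      (∃ t : T, A.src t = q ∧ A.sym t = σ ∧ (A.chk t).Accepts m) →
      (∀ t : T, A.src t = q → A.sym t = σ → (A.chk t).Accepts m →
        TwoStoreAcc A (A.dst t) rest) →
      TwoStoreAcc A q ((σ, m) :: rest)

/-- A set of configurations is 2-store-regular iff it is recognized (via an
embedding of the configuration states) by an alternating 2-store automaton
with finitely many states, checking automata states and transitions. -/
def TwoStoreRegular {Q Sig : Type} (C : Set (Q × List (Sig × ℕ))) : Prop :=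
  ∃ (Q' S T : Type) (_ : Fintype Q') (_ : Fintype S) (_ : Fintype T)
    (A : TwoStore Q' Sig S T) (ι : Q → Q'),
    C = { c | TwoStoreAcc A (ι c.1) c.2 }

end Enc

/-- The set of storages `(⊥,v₁)…(⊥,v_n)` with `p_i ∣ v_i` for each `i`
(`p_i` the `i`-th prime, `Nat.nth Nat.Prime 0 = 2`). -/
def DivStor {Sig : Type} (bot : Sig) (n : ℕ) : Set (List (Sig × ℕ)) :=
  { x | x.length = n ∧ ∀ i : Fin x.length,
      (x.get i).1 = bot ∧ Nat.nth Nat.Prime (i : ℕ) ∣ (x.get i).2 }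



namespace PfPrime

lemma sq_le_four_pow (k : ℕ) : (k+2)^2 ≤ 4^(k+1) := by
  induction k with
  | zero => norm_num
  | succ k ih =>
    have : (k+3)^2 ≤ 4*(k+2)^2 := by ring_nf; nlinarith
    calc (k+3)^2 ≤ 4*(k+2)^2 := this
      _ ≤ 4*4^(k+1) := by omega
      _ = 4^(k+2) := by ring

lemma cb_le : ∀ n : ℕ, 0 < n →
    Nat.centralBinom n ≤ (2*n)^(Nat.count Nat.Prime (2*n+1)) := by
  intro n hn
  have h1 : Nat.centralBinom n =
      ∏ p ∈ (Nat.centralBinom n).primeFactors, p ^ (Nat.centralBinom n).factorization p :=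
    (Nat.factorization_prod_pow_eq_self (Nat.centralBinom_pos n).ne').symm
  have hsub : (Nat.centralBinom n).primeFactors ⊆
      (Finset.range (2*n+1)).filter Nat.Prime := by
    intro p hp
    have hp' := Nat.prime_of_mem_primeFactors hp
    have hdvd : (Nat.centralBinom n).factorization p ≠ 0 := by
      rwa [← Finsupp.mem_support_iff, Nat.support_factorization]
    have hle : p ^ (Nat.centralBinom n).factorization p ≤ 2*n :=
      Nat.pow_factorization_choose_le (by omega)
    have : p ≤ 2*n := le_trans (Nat.le_self_pow hdvd p) hle
    simp [Finset.mem_filter, Finset.mem_range, hp', Nat.lt_succ_of_le this]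
  calc Nat.centralBinom n
      = ∏ p ∈ (Nat.centralBinom n).primeFactors, p ^ (Nat.centralBinom n).factorization p := h1
    _ ≤ ∏ _p ∈ (Nat.centralBinom n).primeFactors, 2*n := by
        apply Finset.prod_le_prod (by intros; positivity)
        intro p hp
        exact Nat.pow_factorization_choose_le (by omega)
    _ = (2*n)^(Nat.centralBinom n).primeFactors.card := by
        rw [Finset.prod_const]
    _ ≤ (2*n)^(Nat.count Nat.Prime (2*n+1)) := by
        apply Nat.pow_le_pow_right (by omega)
        rw [Nat.count_eq_card_filter_range]
        exact Finset.card_le_card hsub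

lemma count_lower (n : ℕ) (hn : 4 ≤ n) :
    2*n ≤ (Nat.log 2 (2*n) + 1) * (Nat.count Nat.Prime (2*n+1) + 1) := by
  set π := Nat.count Nat.Prime (2*n+1)
  have h1 : 4^n < n * Nat.centralBinom n := Nat.four_pow_lt_mul_centralBinom n hn
  have h2 : (4:ℕ)^n ≤ (2*n)^(π+1) := by
    calc (4:ℕ)^n ≤ n * Nat.centralBinom n := h1.le
      _ ≤ (2*n) * (2*n)^π := by
          have := cb_le n (by omega)
          have hn' : n ≤ 2*n := by omega
          exact Nat.mul_le_mul hn' this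
      _ = (2*n)^(π+1) := by ring
  have hL : 2*n < 2^(Nat.log 2 (2*n) + 1) := Nat.lt_pow_succ_log_self (by norm_num) _
  have h3 : (4:ℕ)^n = 2^(2*n) := by
    rw [show (4:ℕ) = 2^2 by norm_num, ← pow_mul]
  have h4 : (2:ℕ)^(2*n) ≤ 2^((Nat.log 2 (2*n) + 1) * (π+1)) := by
    calc (2:ℕ)^(2*n) = 4^n := h3.symm
      _ ≤ (2*n)^(π+1) := h2
      _ ≤ (2^(Nat.log 2 (2*n) + 1))^(π+1) := Nat.pow_le_pow_left hL.le _
      _ = 2^((Nat.log 2 (2*n) + 1) * (π+1)) := by rw [← pow_mul]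
  exact (Nat.pow_le_pow_iff_right (by norm_num)).mp h4

lemma nth_prime_le (k : ℕ) : Nat.nth Nat.Prime k ≤ 2*(k+2)^2 := by
  set n := (k+2)^2 with hn
  have hn4 : 4 ≤ n := by rw [hn, pow_two]; nlinarith
  have hlog : Nat.log 2 (2*n) + 1 ≤ 2*(k+2) := by
    have hlt : 2*n < 2^(2*k+4) := by
      have := sq_le_four_pow k
      have h4 : (4:ℕ)^(k+1) = 2^(2*k+2) := by
        rw [show (4:ℕ) = 2^2 by norm_num, ← pow_mul]; ring_nf
      have : n ≤ 2^(2*k+2) := by omega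
      have h2 : 2*n ≤ 2^(2*k+3) := by
        calc 2*n ≤ 2*2^(2*k+2) := by omega
          _ = 2^(2*k+3) := by ring
      calc 2*n ≤ 2^(2*k+3) := h2
        _ < 2^(2*k+4) := by apply Nat.pow_lt_pow_right <;> omega
    have := Nat.log_lt_of_lt_pow (by omega : 2*n ≠ 0) hlt
    omega
  have hcount : k < Nat.count Nat.Prime (2*n+1) := by
    by_contra h
    push_neg at h
    have := count_lower n hn4
    have : 2*n ≤ 2*(k+2)*(k+1) := by
      calc 2*n ≤ (Nat.log 2 (2*n) + 1) * (Nat.count Nat.Prime (2*n+1) + 1) := this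
        _ ≤ (2*(k+2)) * (k+1) := Nat.mul_le_mul hlog (by omega)
    rw [hn] at this
    nlinarith
  have := Nat.nth_lt_of_lt_count hcount
  omega

end PfPrime

namespace Pf
open PfPrime
open Enc

noncomputable def pr (i : ℕ) : ℕ := Nat.nth Nat.Prime i

lemma pr_prime (i : ℕ) : Nat.Prime (pr i) :=
  Nat.nth_mem_of_infinite Nat.infinite_setOf_prime i

lemma pr_pos (i : ℕ) : 0 < pr i := (pr_prime i).pos

noncomputable def dfaNext (n : ℕ) : (Σ i : Fin n, Fin (pr i)) → (Σ i : Fin n, Fin (pr i)) :=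
  fun s => ⟨s.1, ⟨(s.2 + 1) % pr s.1, Nat.mod_lt _ (pr_pos _)⟩⟩

noncomputable def dfa (n : ℕ) (i : Fin n) : Enc.UnaryDFA (Σ i : Fin n, Fin (pr i)) where
  init := ⟨i, ⟨0, pr_pos _⟩⟩
  next := dfaNext n
  acc := {⟨i, ⟨0, pr_pos _⟩⟩}

lemma dfa_iter (n : ℕ) (i : Fin n) (m : ℕ) :
    (dfaNext n)^[m] ⟨i, ⟨0, pr_pos _⟩⟩ = ⟨i, ⟨m % pr i, Nat.mod_lt _ (pr_pos _)⟩⟩ := by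
  induction m with
  | zero => simp
  | succ m ih =>
    rw [Function.iterate_succ_apply', ih]
    simp only [dfaNext]
    congr 1
    ext
    show (m % pr i + 1) % pr i = (m + 1) % pr i
    conv_rhs => rw [Nat.add_mod]
    rw [Nat.mod_eq_of_lt (pr_prime i).one_lt]

lemma dfa_acc (n : ℕ) (i : Fin n) (m : ℕ) :
    (dfa n i).Accepts m ↔ pr i ∣ m := by
  unfold UnaryDFA.Accepts
  show (dfaNext n)^[m] ⟨i, ⟨0, pr_pos _⟩⟩ ∈ ({⟨i, ⟨0, pr_pos _⟩⟩} : Set _) ↔ _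
  rw [dfa_iter, Set.mem_singleton_iff, Nat.dvd_iff_mod_eq_zero]
  constructor
  · intro h
    have := congrArg (fun s : (Σ j : Fin n, Fin (pr j)) => (s.2 : ℕ)) h
    simpa using this
  · intro h
    simp only [h]

variable {Sig : Type} (bot : Sig)

noncomputable def TS (n : ℕ) : TwoStore (Fin (n+1)) Sig (Σ i : Fin n, Fin (pr i)) (Fin n) where
  exQ := fun _ => true
  final := {Fin.last n}
  src := Fin.castSucc
  sym := fun _ => bot
  chk := dfa n
  dst := Fin.succ

lemma ts_fwd (n : ℕ) : ∀ (x : List (Sig × ℕ)) (j : ℕ) (hj : j ≤ n),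
    TwoStoreAcc (TS bot n) ⟨j, by omega⟩ x →
    x.length + j = n ∧ ∀ i (hi : i < x.length),
      (x.get ⟨i, hi⟩).1 = bot ∧ pr (j + i) ∣ (x.get ⟨i, hi⟩).2 := by
  intro x
  induction x with
  | nil =>
    intro j hj h
    cases h with
    | empty hf =>
      have : j = n := by
        have := Fin.val_eq_of_eq (Set.mem_singleton_iff.mp hf)
        simpa using this
      refine ⟨by simpa using this, ?_⟩
      intro i hi; exact absurd hi (by simp)
  | cons e rest ih =>
    intro j hj h
    cases h with
    | ex t hT hsrc hsym hchk hrest =>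
      rename_i σ m
      have htj : (t : ℕ) = j := Fin.val_eq_of_eq hsrc
      have hjn : j < n := htj ▸ t.isLt
      have hdst : (TS bot n).dst t = (⟨j+1, by omega⟩ : Fin (n+1)) := by
        show t.succ = _
        ext
        simp [htj]
      rw [hdst] at hrest
      obtain ⟨hlen, hall⟩ := ih (j+1) (by omega) hrest
      have hdvd : pr j ∣ m := by
        have := (dfa_acc n t m).mp hchk
        rwa [htj] at this
      have hsig : σ = bot := hsym.symm
      constructor
      · simp only [List.length_cons]; omega
      · intro i hi
        match i with
        | 0 => exact ⟨hsig, by simpa using hdvd⟩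
        | i+1 =>
          have := hall i (by simpa using hi)
          refine ⟨this.1, ?_⟩
          have : pr (j + (i+1)) ∣ (rest.get ⟨i, by simpa using hi⟩).2 := by
            have h2 := (hall i (by simpa using hi)).2
            rwa [show j + 1 + i = j + (i+1) by omega] at h2
          simpa using this
    | all hex h1 h2 => simp [TS] at hex

lemma ts_bwd (n : ℕ) : ∀ (x : List (Sig × ℕ)) (j : ℕ) (hj : j ≤ n),
    x.length + j = n →
    (∀ i (hi : i < x.length),
      (x.get ⟨i, hi⟩).1 = bot ∧ pr (j + i) ∣ (x.get ⟨i, hi⟩).2) →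
    TwoStoreAcc (TS bot n) ⟨j, by omega⟩ x := by
  intro x
  induction x with
  | nil =>
    intro j hj hlen _
    have : j = n := by simpa using hlen
    subst this
    exact TwoStoreAcc.empty (by simp only [TS, Set.mem_singleton_iff]; ext; simp [Fin.last])
  | cons e rest ih =>
    intro j hj hlen hall
    have hjn : j < n := by simp at hlen; omega
    have h0 := hall 0 (by simp)
    have hrest : TwoStoreAcc (TS bot n) ⟨j+1, by omega⟩ rest := by
      apply ih (j+1) (by omega) (by simp at hlen ⊢; omega)
      intro i hi
      have := hall (i+1) (by simpa using hi)
      refine ⟨by simpa using this.1, ?_⟩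
      have h2 := this.2
      rw [show j + (i+1) = j + 1 + i by omega] at h2
      simpa using h2
    have he : e = (e.1, e.2) := rfl
    rw [he]
    refine TwoStoreAcc.ex (⟨j, hjn⟩ : Fin n) rfl ?_ ?_ ?_ ?_
    · show Fin.castSucc _ = _
      ext; simp
    · exact h0.1.symm
    · exact (dfa_acc n ⟨j, hjn⟩ e.2).mpr (by simpa using h0.2)
    · have hd : (TS bot n).dst ⟨j, hjn⟩ = (⟨j+1, by omega⟩ : Fin (n+1)) := by
        ext; simp [TS]
      rw [hd]; exact hrest

lemma ts_lang (n : ℕ) :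
    { x | TwoStoreAcc (TS bot n) (⟨0, by omega⟩ : Fin (n+1)) x } = DivStor bot n := by
  ext x
  simp only [Set.mem_setOf_eq, DivStor]
  constructor
  · intro h
    obtain ⟨hlen, hall⟩ := ts_fwd bot n x 0 (by omega) h
    refine ⟨by omega, ?_⟩
    intro i
    have := hall i i.isLt
    simpa [pr] using this
  · rintro ⟨hlen, hall⟩
    apply ts_bwd bot n x 0 (by omega) (by omega)
    intro i hi
    have := hall ⟨i, hi⟩
    simpa [pr] using this


def comb : ℕ → BTree (Sig ⊕ Unit)
  | 0 => .nil
  | n+1 => .node (.inl bot) (.node (.inl bot) .nil .nil) (comb n)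

def spine (n : ℕ) : ℕ → BTree (Sig ⊕ Unit)
  | 0 => comb bot n
  | k+1 => .node (.inl bot) (spine n k) .nil

lemma encodes_nil {x : List (Sig × ℕ)} (h : Encodes (Q := Unit) bot x BTree.nil) :
    x = [] := by cases h; rfl

lemma not_encodes_leafnode {y : List (Sig × ℕ)} {a : Sig ⊕ Unit} :
    ¬ Encodes (Q := Unit) bot y (BTree.node a .nil .nil) := by
  intro h
  cases h with
  | pos hpl hge hhd hl hr =>
    exact hpl (by simpa using encodes_nil bot hl)

lemma encodes_comb : ∀ (n : ℕ) (x : List (Sig × ℕ)),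
    Encodes (Q := Unit) bot x (comb bot n) → x = List.replicate n (bot, 0) := by
  intro n
  induction n with
  | zero => intro x h; exact encodes_nil bot h
  | succ n ih =>
    intro x h
    rw [show comb bot (n+1) =
        BTree.node (.inl bot) (.node (.inl bot) .nil .nil) (comb bot n) from rfl] at h
    cases h with
    | zero hrest => rw [ih _ hrest]; rfl
    | pos hpl hge hhd hl hr => exact absurd hl (not_encodes_leafnode bot)

lemma spine_ne_nil {n : ℕ} (hn : 1 ≤ n) (k : ℕ) : spine bot n k ≠ BTree.nil := by
  cases k with
  | zero =>
    obtain ⟨n, rfl⟩ := Nat.exists_eq_add_of_le hn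
    show comb bot (1 + n) ≠ BTree.nil
    rw [show 1 + n = n + 1 by omega]
    simp [comb]
  | succ k => simp [spine]

lemma encodes_spine {n : ℕ} (hn : 1 ≤ n) : ∀ (k : ℕ) (x : List (Sig × ℕ)),
    Encodes (Q := Unit) bot x (spine bot n k) → x = List.replicate n (bot, k) := by
  intro k
  induction k with
  | zero => intro x h; exact encodes_comb bot n x h
  | succ k ih =>
    intro x h
    rw [show spine bot n (k+1) =
        BTree.node (.inl bot) (spine bot n k) .nil from rfl] at h
    generalize ht : spine bot n k = t at h
    cases h with
    | zero hrest =>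
      -- ht : spine bot n k = .node (.inl σ) .nil .nil
      exfalso
      cases k with
      | zero =>
        obtain ⟨n, rfl⟩ := Nat.exists_eq_add_of_le hn
        rw [show spine bot (1+n) 0 = comb bot (1+n) from rfl,
          show 1 + n = n + 1 by omega] at ht
        rw [show comb bot (n+1) =
          BTree.node (.inl bot) (.node (.inl bot) .nil .nil) (comb bot n) from rfl] at ht
        simp at ht
      | succ k =>
        rw [show spine bot n (k+1) =
          BTree.node (.inl bot) (spine bot n k) .nil from rfl] at ht
        have := spine_ne_nil bot hn k
        simp at ht
        exact this ht.2
    | pos hpl hge hhd hl hr =>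
      -- hl : Encodes (pl.map _) t, ht : spine bot n k = t
      rw [← ht] at hl
      have hmap := ih _ hl
      have hpr := encodes_nil bot hr
      subst hpr
      have hlen : _ := congrArg List.length hmap
      simp at hlen
      have hentries : ∀ e ∈ _, _ := (List.eq_replicate_iff.mp hmap).2
      have : ∀ e ∈ _, _ := hge
      rw [List.append_nil]
      rw [List.eq_replicate_iff]
      constructor
      · simpa using hlen
      · intro e he
        have h1 := hge e he
        have h2 := hentries ((e.1, e.2 - 1)) (List.mem_map_of_mem (f := fun e : Sig × ℕ => (e.1, e.2 - 1)) he)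
        have : e.1 = bot ∧ e.2 - 1 = k := by
          constructor
          · exact congrArg Prod.fst h2
          · exact congrArg Prod.snd h2
        obtain ⟨hb, hk⟩ := this
        have : e = (e.1, e.2) := rfl
        rw [this, hb]
        have : e.2 = k + 1 := by omega
        rw [this]

lemma encodes_comb_pos : ∀ n : ℕ,
    Encodes (Q := Unit) bot (List.replicate n (bot, 0)) (comb bot n) := by
  intro n
  induction n with
  | zero => exact Encodes.nil
  | succ n ih =>
    rw [List.replicate_succ]
    exact Encodes.zero ih

lemma encodes_replicate {n : ℕ} (hn : 1 ≤ n) : ∀ k : ℕ,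
    Encodes (Q := Unit) bot (List.replicate n (bot, k)) (spine bot n k) := by
  intro k
  induction k with
  | zero => exact encodes_comb_pos bot n
  | succ k ih =>
    have hne : List.replicate n (bot, k+1) ≠ [] := by
      simp only [ne_eq, List.replicate_eq_nil_iff, not_or]
      omega
    have := Encodes.pos (bot := bot) (pr := []) (tl := spine bot n k)
      (tr := BTree.nil) hne
      (by intro e he; rw [List.eq_of_mem_replicate he]; omega)
      (by intro x hx; simp at hx)
      (by rw [List.map_replicate]; exact ih)
      Encodes.nil
    rw [List.append_nil] at this
    exact this

lemma run_chain {St : Type} (A : TreeAut (Sig ⊕ Unit) St) (n : ℕ) :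
    ∀ (m : ℕ) (S : St), TreeAutEval A (spine bot n m) S →
    ∃ g : ℕ → St, g m = S ∧ (∀ k, k ≤ m → TreeAutEval A (spine bot n k) (g k)) ∧
      (∀ k, k < m → ∃ r ∈ A.leaf, g (k+1) ∈ A.trans (.inl bot) (g k) r) := by
  intro m
  induction m with
  | zero =>
    intro S h
    exact ⟨fun _ => S, rfl, fun k hk => by rw [Nat.le_zero.mp hk]; exact h,
      fun k hk => absurd hk (by omega)⟩
  | succ m ih =>
    intro S h
    rw [show spine bot n (m+1) =
        BTree.node (.inl bot) (spine bot n m) .nil from rfl] at h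
    cases h with
    | node hl hr htr =>
      rename_i sl sr
      obtain ⟨g, hg1, hg2, hg3⟩ := ih _ hl
      have hleaf : sr ∈ A.leaf := by cases hr with | nil hs => exact hs
      refine ⟨fun k => if k = m+1 then S else g k, by simp, ?_, ?_⟩
      · intro k hk
        by_cases hkm : k = m+1
        · subst hkm
          simp only [if_pos rfl]
          rw [show spine bot n (m+1) =
            BTree.node (.inl bot) (spine bot n m) .nil from rfl]
          exact TreeAutEval.node (hg1 ▸ hg2 m le_rfl) hr htr
        · simp only [if_neg hkm]
          exact hg2 k (by omega)
      · intro k hk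
        by_cases hkm : k + 1 = m + 1
        · have : k = m := by omega
          subst this
          refine ⟨_, hleaf, ?_⟩
          simp only [if_pos rfl, if_neg (by omega : k ≠ k + 1)]
          rw [hg1]
          exact htr
        · obtain ⟨r, h1, h2⟩ := hg3 k (by omega)
          refine ⟨r, h1, ?_⟩
          simp only [if_neg hkm, if_neg (by omega : k ≠ m + 1)]
          exact h2

lemma grow {St : Type} (A : TreeAut (Sig ⊕ Unit) St) {n m : ℕ} (g : ℕ → St)
    (hstep : ∀ k, k < m → ∃ r ∈ A.leaf, g (k+1) ∈ A.trans (.inl bot) (g k) r) :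
    ∀ (d c c' : ℕ), c' + d ≤ m → TreeAutEval A (spine bot n c) (g c') →
    TreeAutEval A (spine bot n (c + d)) (g (c' + d)) := by
  intro d
  induction d with
  | zero => intro c c' _ h; exact h
  | succ d ih =>
    intro c c' hle h
    have h1 := ih c c' (by omega) h
    obtain ⟨r, hr, htr⟩ := hstep (c' + d) (by omega)
    exact TreeAutEval.node h1 (TreeAutEval.nil hr) htr


lemma tree_lb (n : ℕ) (St : Type) [Fintype St] (TA : TreeAut (Sig ⊕ Unit) St)
    (hL : { t | TA.Accepts t } =
      EncImage bot { c' : Unit × List (Sig × ℕ) | c'.2 ∈ DivStor bot n }) :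
    2^n ≤ Fintype.card St := by
  by_contra hlt
  push_neg at hlt
  set m := ∏ i ∈ Finset.range n, pr i with hm
  have hm2 : 2^n ≤ m := by
    rw [hm]
    calc (2:ℕ)^n = ∏ _i ∈ Finset.range n, 2 := by
          rw [Finset.prod_const, Finset.card_range]
      _ ≤ ∏ i ∈ Finset.range n, pr i :=
          Finset.prod_le_prod' fun i _ => (pr_prime i).two_le
  have hmpos : 0 < m := by
    have : (0:ℕ) < 2^n := by positivity
    omega
  have hdivm : ∀ i < n, pr i ∣ m := by
    intro i hi
    exact Finset.dvd_prod_of_mem _ (Finset.mem_range.mpr hi)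
  rcases Nat.eq_zero_or_pos n with hn0 | hn1
  · -- n = 0 : card St = 0 but some tree accepted
    subst hn0
    have hcard : Fintype.card St = 0 := by omega
    have hacc : TA.Accepts (BTree.node (.inr ()) BTree.nil BTree.nil) := by
      have : (BTree.node (.inr ()) BTree.nil BTree.nil : BTree (Sig ⊕ Unit)) ∈
          EncImage bot { c' : Unit × List (Sig × ℕ) | c'.2 ∈ DivStor bot 0 } := by
        refine ⟨((), []), ?_, BTree.nil, Encodes.nil, rfl⟩
        constructor
        · rfl
        · intro i; exact absurd i.isLt (by simp)
      rw [← hL] at this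
      exact this
    obtain ⟨F, _, _⟩ := hacc
    exact absurd hcard (by have := Fintype.card_pos_iff.mpr ⟨F⟩; omega)
  · -- main case n ≥ 1
    have hmem : List.replicate n ((bot : Sig), m) ∈ DivStor bot n := by
      constructor
      · simp
      · intro i
        have hi : (i : ℕ) < n := by
          have := i.isLt; simpa using this
        constructor
        · simp
        · have : (List.replicate n ((bot : Sig), m)).get i = (bot, m) := by
            simp
          rw [this]
          exact hdivm _ hi
    have hacc : TA.Accepts (BTree.node (.inr ()) (spine bot n m) BTree.nil) := by
      have : (BTree.node (.inr ()) (spine bot n m) BTree.nil : BTree (Sig ⊕ Unit)) ∈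
          EncImage bot { c' : Unit × List (Sig × ℕ) | c'.2 ∈ DivStor bot n } :=
        ⟨((), List.replicate n (bot, m)), hmem, spine bot n m,
          encodes_replicate bot hn1 m, rfl⟩
      rw [← hL] at this
      exact this
    obtain ⟨F, hF, hev⟩ := hacc
    cases hev with
    | node hsl hsr htr =>
      rename_i sl sr
      obtain ⟨g, hg1, hg2, hg3⟩ := run_chain bot TA n m sl hsl
      have key : ∀ a b : Fin m, (a : ℕ) < (b : ℕ) → g (a+1) = g (b+1) → False := by
        intro a b hab heq
        set a1 := (a : ℕ) + 1
        set b1 := (b : ℕ) + 1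
        have hb1 : b1 ≤ m := b.isLt
        have heva : TreeAutEval TA (spine bot n a1) (g b1) := by
          rw [← heq]; exact hg2 a1 (by omega)
        have hgrow := grow bot TA g hg3 (m - b1) a1 b1 (by omega) heva
        rw [Nat.add_sub_cancel' hb1] at hgrow
        set m' := a1 + (m - b1) with hm'
        have hm'1 : 1 ≤ m' := by omega
        have hm'lt : m' < m := by omega
        have hacc' : TA.Accepts (BTree.node (.inr ()) (spine bot n m') BTree.nil) :=
          ⟨F, hF, TreeAutEval.node (hg1 ▸ hgrow) hsr htr⟩
        have hmem' : (BTree.node (.inr ()) (spine bot n m') BTree.nil : BTree (Sig ⊕ Unit)) ∈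
            EncImage bot { c' : Unit × List (Sig × ℕ) | c'.2 ∈ DivStor bot n } := by
          rw [← hL]; exact hacc'
        obtain ⟨c, hc, tp, htp, heqT⟩ := hmem'
        have htp' : tp = spine bot n m' := by
          cases heqT; rfl
        rw [htp'] at htp
        have hx := encodes_spine bot hn1 m' c.2 htp
        -- now divisibility
        have hc2 : List.replicate n ((bot : Sig), m') ∈ DivStor bot n := by
          rw [← hx]; exact hc
        have hdvd : ∀ i < n, pr i ∣ m' := by
          intro i hi
          have h2 := (hc2.2 ⟨i, by simpa using hi⟩).2
          simpa [pr] using h2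
        have hmd : m ∣ m' := by
          have h1 : ∏ p ∈ (Finset.range n).image (Nat.nth Nat.Prime), p ∣ m' := by
            apply Finset.prod_primes_dvd
            · intro p hp
              simp only [Finset.mem_image] at hp
              obtain ⟨i, _, rfl⟩ := hp
              exact (pr_prime i).prime
            · intro p hp
              simp only [Finset.mem_image] at hp
              obtain ⟨i, hi, rfl⟩ := hp
              exact hdvd i (Finset.mem_range.mp hi)
          rwa [Finset.prod_image (fun i _ j _ h =>
            Nat.nth_injective Nat.infinite_setOf_prime h)] at h1
        have := Nat.le_of_dvd (by omega) hmd
        omega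
      have hcard : Fintype.card St < Fintype.card (Fin m) := by
        rw [Fintype.card_fin]; omega
      obtain ⟨a, b, hab, hfab⟩ :=
        Fintype.exists_ne_map_eq_of_card_lt (fun i : Fin m => g ((i : ℕ)+1)) hcard
      rcases Ne.lt_or_gt hab with h | h
      · exact key a b h hfab
      · exact key b a h hfab.symm

end Pf

/-- For every `n` there is a deterministic 2-store automaton
`A_n` with `O(n³)` states accepting exactly the storages `(⊥,v₁)…(⊥,v_n)` with
`p_i ∣ v_i` for each `i`, while every tree automaton recognizing the
E-encoding of this set of configurations needs at least `2ⁿ` states: the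
translation from 2-store automata to tree automata over the encoding `E`
requires an exponential blow-up. -/
theorem twostore_to_tree_blowup {Sig : Type} (bot : Sig) :
    ∃ c : ℕ, ∀ n : ℕ,
      (∃ (Q' S T : Type) (_ : Fintype Q') (_ : Fintype S) (_ : Fintype T)
        (A : Enc.TwoStore Q' Sig S T) (q0 : Q'),
        (∀ q : Q', A.exQ q = true) ∧
        (∀ t t' : T, A.src t = A.src t' → A.sym t = A.sym t' → t = t') ∧
        Fintype.card Q' + Fintype.card S + Fintype.card T ≤ c * (n + 1) ^ 3 ∧
        { x | Enc.TwoStoreAcc A q0 x } = DivStor bot n) ∧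
      (∀ (St : Type) (_ : Fintype St) (TA : Enc.TreeAut (Sig ⊕ Unit) St),
        { t | TA.Accepts t } =
          Enc.EncImage bot { c' : Unit × List (Sig × ℕ) | c'.2 ∈ DivStor bot n } →
        2 ^ n ≤ Fintype.card St) := by
  refine ⟨4, fun n => ⟨?_, ?_⟩⟩
  · refine ⟨Fin (n+1), (Σ i : Fin n, Fin (Pf.pr i)), Fin n, inferInstance,
      inferInstance, inferInstance, Pf.TS bot n, ⟨0, by omega⟩, ?_, ?_, ?_, ?_⟩
    · intro q; rfl
    · intro t t' hsrc _
      exact Fin.castSucc_injective n hsrc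
    · have h1 : Fintype.card (Σ i : Fin n, Fin (Pf.pr i)) ≤ 2*n*(n+1)^2 := by
        rw [Fintype.card_sigma]
        calc ∑ i : Fin n, Fintype.card (Fin (Pf.pr i))
            ≤ ∑ _i : Fin n, 2*(n+1)^2 := by
              apply Finset.sum_le_sum
              intro i _
              rw [Fintype.card_fin]
              calc Pf.pr i ≤ 2*((i:ℕ)+2)^2 := PfPrime.nth_prime_le (i:ℕ)
                _ ≤ 2*(n+1)^2 := by
                    have : (i:ℕ) + 2 ≤ n + 1 := by have := i.isLt; omega
                    nlinarith
          _ = n * (2*(n+1)^2) := by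
              rw [Finset.sum_const, Finset.card_univ, Fintype.card_fin]; simp [mul_comm]
          _ = 2*n*(n+1)^2 := by ring
      simp only [Fintype.card_fin]
      nlinarith [h1]
    · exact Pf.ts_lang bot n
  · intro St _ TA h
    exact Pf.tree_lb bot n St TA h
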